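/- Let V : ℝ → ℝ be defined by V(x) = 0 on [0,1], V(x) = ṡ(1)(x−1)+...+ṡ(n)(x−n) for x ∈ (n, n+1], and V(x) = −ṡ(0)x−...−ṡ(−n)(x+n) for x ∈ [−n−1, −n), where ṡ : ℤ → ℝ satisfies |ṡ(m) + ((k−1)/k)[ṡ(m+1)+ṡ(m−1)] + ((k−2)/k)[ṡ(m+2)+ṡ(m−2)] + ... + (1/k)[ṡ(m+k)+ṡ(m−k)]| ≤ C for all m ∈ ℤ and k ≥ 1 (in particular ‖ṡ‖_∞ ≤ C). Then V satisfies the Zygmund condition |V(x+t) + V(x−t) − 2V(x)| ≤ (2C + 18C)·t for all x ∈ ℝ and t > 0. -/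

import Mathlib

open Finset Set


private lemma max_ident (a t : ℝ) (ht : 0 ≤ t) :
    max (a + t) 0 + max (a - t) 0 - 2 * max a 0 = max (t - |a|) 0 := by
  rcases le_total a 0 with h | h <;>
    [rw [abs_of_nonpos h]; rw [abs_of_nonneg h]] <;>
    rcases le_total t (-a) with h2 | h2 <;> rcases le_total t a with h3 | h3 <;>
    simp only [max_def] <;> split_ifs <;> linarith

private lemma sum_Icc_cast (f : ℤ → ℝ) (n : ℕ) :
    ∑ i ∈ Finset.Icc (1:ℤ) (n:ℤ), f i = ∑ i ∈ Finset.Icc 1 n, f (i:ℤ) := by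
  induction n with
  | zero => simp
  | succ n ih =>
    have h1 : Finset.Icc (1:ℤ) ((n+1:ℕ):ℤ) = insert ((n:ℤ)+1) (Finset.Icc (1:ℤ) (n:ℤ)) := by
      ext a; simp only [Finset.mem_Icc, Finset.mem_insert]; omega
    have h2 : ((n:ℤ)+1) ∉ Finset.Icc (1:ℤ) (n:ℤ) := by simp
    rw [h1, Finset.sum_insert h2, ih, Finset.sum_Icc_succ_top (by omega : 1 ≤ n+1)]
    push_cast; ring

private lemma sum_Icc_neg_cast (f : ℤ → ℝ) (n : ℕ) :
    ∑ i ∈ Finset.Icc (-(n:ℤ)) (-1:ℤ), f i = ∑ i ∈ Finset.Icc 1 n, f (-(i:ℤ)) := by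
  induction n with
  | zero => simp
  | succ n ih =>
    have h1 : Finset.Icc (-((n+1:ℕ):ℤ)) (-1:ℤ)
        = insert (-((n:ℤ)+1)) (Finset.Icc (-(n:ℤ)) (-1:ℤ)) := by
      ext a; simp only [Finset.mem_Icc, Finset.mem_insert]; omega
    have h2 : (-((n:ℤ)+1)) ∉ Finset.Icc (-(n:ℤ)) (-1:ℤ) := by
      simp only [Finset.mem_Icc]; omega
    rw [h1, Finset.sum_insert h2, ih, Finset.sum_Icc_succ_top (by omega : 1 ≤ n+1)]
    push_cast; ring

private lemma sum_Icc_neg_cast' (f : ℤ → ℝ) (n : ℕ) :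
    ∑ i ∈ Finset.Icc (-(n:ℤ)) (0:ℤ), f i = ∑ i ∈ Finset.range (n+1), f (-(i:ℤ)) := by
  have h1 : Finset.Icc (-(n:ℤ)) (0:ℤ) = insert 0 (Finset.Icc (-(n:ℤ)) (-1:ℤ)) := by
    ext a; simp only [Finset.mem_Icc, Finset.mem_insert]; omega
  have h2 : (0:ℤ) ∉ Finset.Icc (-(n:ℤ)) (-1:ℤ) := by simp
  have h3 : ∀ m : ℕ, ∑ i ∈ Finset.range (m+1), f (-(i:ℤ)) = f 0 + ∑ i ∈ Finset.Icc 1 m, f (-(i:ℤ)) := by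
    intro m
    induction m with
    | zero => simp
    | succ m ih =>
      rw [Finset.sum_range_succ, Finset.sum_Icc_succ_top (by omega : 1 ≤ m+1), ih]
      ring
  rw [h1, Finset.sum_insert h2, sum_Icc_neg_cast, h3]

private lemma V_formula (s : ℤ → ℝ) (V : ℝ → ℝ)
    (hV01 : ∀ x ∈ Set.Icc (0 : ℝ) 1, V x = 0)
    (hVpos : ∀ n : ℕ, ∀ x ∈ Set.Ioc (n : ℝ) ((n : ℝ) + 1),
      V x = ∑ i ∈ Finset.Icc 1 n, s (i : ℤ) * (x - i))
    (hVneg : ∀ n : ℕ, ∀ x ∈ Set.Ico (-(n : ℝ) - 1) (-(n : ℝ)),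
      V x = -∑ i ∈ Finset.range (n + 1), s (-(i : ℤ)) * (x + i))
    (N : ℕ) (x : ℝ) (hx : |x| ≤ N) :
    V x = (∑ n ∈ Finset.Icc (1:ℤ) (N:ℤ), s n * max (x - n) 0)
        + (∑ n ∈ Finset.Icc (-(N:ℤ)) 0, s n * max ((n:ℝ) - x) 0) := by
  rcases le_or_gt 0 x with hx0 | hx0
  · -- x ≥ 0 : second sum vanishes
    have hxN : x ≤ N := le_trans (le_abs_self x) hx
    have hneg : (∑ n ∈ Finset.Icc (-(N:ℤ)) 0, s n * max ((n:ℝ) - x) 0) = 0 := by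
      apply Finset.sum_eq_zero
      intro n hn
      have h1 : (n:ℤ) ≤ 0 := (Finset.mem_Icc.mp hn).2
      have h2 : (n:ℝ) ≤ 0 := by exact_mod_cast h1
      rw [max_eq_right (by linarith), mul_zero]
    rw [hneg, add_zero]
    rcases le_or_gt x 1 with hx1 | hx1
    · rw [hV01 x ⟨hx0, hx1⟩]
      symm; apply Finset.sum_eq_zero
      intro n hn
      have h1 : (1:ℤ) ≤ n := (Finset.mem_Icc.mp hn).1
      have h2 : (1:ℝ) ≤ n := by exact_mod_cast h1
      rw [max_eq_right (by linarith), mul_zero]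
    · set n0 : ℕ := ⌈x⌉₊ - 1 with hn0
      have hcl : 1 < ⌈x⌉₊ := Nat.lt_ceil.mpr (by exact_mod_cast hx1)
      have hsucc : n0 + 1 = ⌈x⌉₊ := by omega
      have hxu : x ≤ (n0:ℝ) + 1 := by
        have := Nat.le_ceil x
        rw [← hsucc] at this; push_cast at this; linarith
      have hxl : (n0:ℝ) < x := by
        have := Nat.ceil_lt_add_one (le_of_lt (lt_trans one_pos hx1))
        rw [← hsucc] at this; push_cast at this; linarith
      have hn0N : (n0:ℤ) ≤ (N:ℤ) := by
        have h1 : (n0:ℝ) < (N:ℝ) := lt_of_lt_of_le hxl hxN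
        exact_mod_cast le_of_lt (by exact_mod_cast h1 : (n0:ℤ) < N)
      have hsub : Finset.Icc (1:ℤ) (n0:ℤ) ⊆ Finset.Icc (1:ℤ) (N:ℤ) :=
        Finset.Icc_subset_Icc le_rfl hn0N
      have key : (∑ n ∈ Finset.Icc (1:ℤ) (N:ℤ), s n * max (x - n) 0)
          = ∑ i ∈ Finset.Icc 1 n0, s (i:ℤ) * (x - i) := by
        rw [← Finset.sum_subset hsub (by
          intro n hn hn'
          simp only [Finset.mem_Icc] at hn hn'
          have h1 : (n0:ℤ) + 1 ≤ n := by omega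
          have h2 : (n0:ℝ) + 1 ≤ n := by exact_mod_cast h1
          rw [max_eq_right (by linarith), mul_zero])]
        rw [sum_Icc_cast (fun n => s n * max (x - n) 0) n0]
        apply Finset.sum_congr rfl
        intro i hi
        have hi' : (i:ℤ) ≤ (n0:ℤ) := by exact_mod_cast (Finset.mem_Icc.mp hi).2
        have h3 : ((i:ℤ):ℝ) ≤ (n0:ℝ) := by exact_mod_cast hi'
        rw [max_eq_left (by linarith)]
        norm_cast
      rw [hVpos n0 x ⟨hxl, hxu⟩, key]
  · -- x < 0 : first sum vanishes
    have hxN : -(N:ℝ) ≤ x := by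
      have := neg_abs_le x; linarith [hx]
    have hpos : (∑ n ∈ Finset.Icc (1:ℤ) (N:ℤ), s n * max (x - n) 0) = 0 := by
      apply Finset.sum_eq_zero
      intro n hn
      have h1 : (1:ℤ) ≤ n := (Finset.mem_Icc.mp hn).1
      have h2 : (1:ℝ) ≤ n := by exact_mod_cast h1
      rw [max_eq_right (by linarith), mul_zero]
    rw [hpos, zero_add]
    set n0 : ℕ := ⌈-x⌉₊ - 1 with hn0
    have hcl : 0 < ⌈-x⌉₊ := Nat.ceil_pos.mpr (by linarith)
    have hsucc : n0 + 1 = ⌈-x⌉₊ := by omega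
    have hxu : -(n0:ℝ) - 1 ≤ x := by
      have := Nat.le_ceil (-x)
      rw [← hsucc] at this; push_cast at this; linarith
    have hxl : x < -(n0:ℝ) := by
      have := Nat.ceil_lt_add_one (by linarith : (0:ℝ) ≤ -x)
      rw [← hsucc] at this; push_cast at this; linarith
    have hn0N : (n0:ℤ) ≤ (N:ℤ) := by
      have h1 : (n0:ℝ) < (N:ℝ) := by linarith
      exact_mod_cast le_of_lt (by exact_mod_cast h1 : (n0:ℤ) < N)
    have hsub : Finset.Icc (-(n0:ℤ)) (0:ℤ) ⊆ Finset.Icc (-(N:ℤ)) 0 :=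
      Finset.Icc_subset_Icc (by omega) le_rfl
    have key : (∑ n ∈ Finset.Icc (-(N:ℤ)) 0, s n * max ((n:ℝ) - x) 0)
        = -∑ i ∈ Finset.range (n0 + 1), s (-(i:ℤ)) * (x + i) := by
      rw [← Finset.sum_subset hsub (by
        intro n hn hn'
        simp only [Finset.mem_Icc] at hn hn'
        have h1 : n ≤ -(n0:ℤ) - 1 := by omega
        have h2 : (n:ℝ) ≤ -(n0:ℝ) - 1 := by exact_mod_cast h1
        rw [max_eq_right (by linarith), mul_zero])]
      rw [sum_Icc_neg_cast' (fun n => s n * max ((n:ℝ) - x) 0) n0, ← Finset.sum_neg_distrib]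
      apply Finset.sum_congr rfl
      intro i hi
      have hi' : i ≤ n0 := by
        have := Finset.mem_range.mp hi; omega
      have h3 : (i:ℝ) ≤ (n0:ℝ) := by exact_mod_cast hi'
      have h4 : (0:ℝ) ≤ ((-(i:ℤ):ℤ):ℝ) - x := by push_cast; linarith
      rw [max_eq_left h4]
      push_cast; ring
    rw [hVneg n0 x ⟨hxu, hxl⟩, key]

private lemma D_formula (s : ℤ → ℝ) (V : ℝ → ℝ)
    (hV01 : ∀ x ∈ Set.Icc (0 : ℝ) 1, V x = 0)
    (hVpos : ∀ n : ℕ, ∀ x ∈ Set.Ioc (n : ℝ) ((n : ℝ) + 1),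
      V x = ∑ i ∈ Finset.Icc 1 n, s (i : ℤ) * (x - i))
    (hVneg : ∀ n : ℕ, ∀ x ∈ Set.Ico (-(n : ℝ) - 1) (-(n : ℝ)),
      V x = -∑ i ∈ Finset.range (n + 1), s (-(i : ℤ)) * (x + i))
    (N : ℕ) (x t : ℝ) (ht : 0 ≤ t) (hx : |x| + t ≤ N) :
    V (x + t) + V (x - t) - 2 * V x
      = ∑ n ∈ Finset.Icc (-(N:ℤ)) (N:ℤ), s n * max (t - |x - n|) 0 := by
  have e1 : |x + t| ≤ N := by
    refine le_trans (abs_add_le x t) ?_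
    rw [abs_of_nonneg ht]; exact hx
  have e2 : |x - t| ≤ N := by
    rw [sub_eq_add_neg]
    refine le_trans (abs_add_le x (-t)) ?_
    rw [abs_neg, abs_of_nonneg ht]; exact hx
  have e3 : |x| ≤ N := by linarith [abs_nonneg x]
  rw [V_formula s V hV01 hVpos hVneg N (x+t) e1, V_formula s V hV01 hVpos hVneg N (x-t) e2,
    V_formula s V hV01 hVpos hVneg N x e3]
  have hunion : Finset.Icc (-(N:ℤ)) (N:ℤ) = Finset.Icc (-(N:ℤ)) 0 ∪ Finset.Icc 1 (N:ℤ) := by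
    ext a; simp only [Finset.mem_Icc, Finset.mem_union]; omega
  have hdisj : Disjoint (Finset.Icc (-(N:ℤ)) 0) (Finset.Icc 1 (N:ℤ)) := by
    rw [Finset.disjoint_left]; intro a ha ha'
    simp only [Finset.mem_Icc] at ha ha'; omega
  rw [hunion, Finset.sum_union hdisj]
  have hpos : (∑ n ∈ Finset.Icc (1:ℤ) (N:ℤ), s n * max (x + t - n) 0)
      + (∑ n ∈ Finset.Icc (1:ℤ) (N:ℤ), s n * max (x - t - n) 0)
      - 2 * (∑ n ∈ Finset.Icc (1:ℤ) (N:ℤ), s n * max (x - n) 0)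
      = ∑ n ∈ Finset.Icc (1:ℤ) (N:ℤ), s n * max (t - |x - n|) 0 := by
    rw [Finset.mul_sum, ← Finset.sum_add_distrib, ← Finset.sum_sub_distrib]
    apply Finset.sum_congr rfl
    intro n _
    have h := max_ident (x - n) t ht
    rw [show x + t - (n:ℝ) = (x - n) + t by ring, show x - t - (n:ℝ) = (x - n) - t by ring, ← h]
    ring
  have hneg : (∑ n ∈ Finset.Icc (-(N:ℤ)) 0, s n * max ((n:ℝ) - (x + t)) 0)
      + (∑ n ∈ Finset.Icc (-(N:ℤ)) 0, s n * max ((n:ℝ) - (x - t)) 0)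
      - 2 * (∑ n ∈ Finset.Icc (-(N:ℤ)) 0, s n * max ((n:ℝ) - x) 0)
      = ∑ n ∈ Finset.Icc (-(N:ℤ)) 0, s n * max (t - |x - n|) 0 := by
    rw [Finset.mul_sum, ← Finset.sum_add_distrib, ← Finset.sum_sub_distrib]
    apply Finset.sum_congr rfl
    intro n _
    have h := max_ident ((n:ℝ) - x) t ht
    rw [show (n:ℝ) - (x + t) = ((n:ℝ) - x) - t by ring,
      show (n:ℝ) - (x - t) = ((n:ℝ) - x) + t by ring, abs_sub_comm x (n:ℝ), ← h]
    ring
  linarith [hpos, hneg]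

private lemma fan_kernel (C : ℝ) (s : ℤ → ℝ)
    (hfan : ∀ m : ℤ, ∀ k : ℕ, 1 ≤ k →
      |s m + ∑ i ∈ Finset.Icc 1 k, ((k : ℝ) - i) / k * (s (m + i) + s (m - i))| ≤ C)
    (m : ℤ) (k : ℕ) (hk : 1 ≤ k) :
    |∑ n ∈ Finset.Icc (m - k) (m + k), s n * ((k:ℝ) - |(n:ℝ) - m|)| ≤ C * k := by
  have hk0 : (0:ℝ) < k := by exact_mod_cast hk
  have key : ∑ n ∈ Finset.Icc (m - k) (m + k), s n * ((k:ℝ) - |(n:ℝ) - m|)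
      = (k:ℝ) * (s m + ∑ i ∈ Finset.Icc 1 k, ((k : ℝ) - i) / k * (s (m + i) + s (m - i))) := by
    have hmap : Finset.Icc (m - k) (m + k)
        = Finset.map (addLeftEmbedding m) (Finset.Icc (-(k:ℤ)) (k:ℤ)) := by
      rw [Finset.map_add_left_Icc]; congr 1 <;> ring
    rw [hmap, Finset.sum_map]
    simp only [addLeftEmbedding_apply]
    have hsplit : Finset.Icc (-(k:ℤ)) (k:ℤ)
        = Finset.Icc (-(k:ℤ)) (-1:ℤ) ∪ Finset.Icc 0 (k:ℤ) := by
      ext a; simp only [Finset.mem_Icc, Finset.mem_union]; omega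
    have hdisj : Disjoint (Finset.Icc (-(k:ℤ)) (-1:ℤ)) (Finset.Icc (0:ℤ) (k:ℤ)) := by
      rw [Finset.disjoint_left]; intro a ha ha'
      simp only [Finset.mem_Icc] at ha ha'; omega
    have hins : Finset.Icc (0:ℤ) (k:ℤ) = insert 0 (Finset.Icc 1 (k:ℤ)) := by
      ext a; simp only [Finset.mem_Icc, Finset.mem_insert]; omega
    rw [hsplit, Finset.sum_union hdisj, hins, Finset.sum_insert (by simp)]
    rw [sum_Icc_neg_cast (fun j => s (m + j) * ((k:ℝ) - |((m + j : ℤ):ℝ) - (m:ℝ)|)) k,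
      sum_Icc_cast (fun j => s (m + j) * ((k:ℝ) - |((m + j : ℤ):ℝ) - (m:ℝ)|)) k]
    have t1 : ∀ i ∈ Finset.Icc 1 k, s (m + -(i:ℤ)) * ((k:ℝ) - |((m + -(i:ℤ) : ℤ):ℝ) - (m:ℝ)|)
        = ((k:ℝ) - i) * s (m - i) := by
      intro i hi
      have : |((m + -(i:ℤ) : ℤ):ℝ) - (m:ℝ)| = (i:ℝ) := by
        push_cast; rw [show (m:ℝ) + -(i:ℝ) - m = -(i:ℝ) by ring, abs_neg,
          abs_of_nonneg (by positivity)]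
      rw [this, show m + -(i:ℤ) = m - i by ring]; ring
    have t2 : ∀ i ∈ Finset.Icc 1 k, s (m + (i:ℤ)) * ((k:ℝ) - |((m + (i:ℤ) : ℤ):ℝ) - (m:ℝ)|)
        = ((k:ℝ) - i) * s (m + i) := by
      intro i hi
      have : |((m + (i:ℤ) : ℤ):ℝ) - (m:ℝ)| = (i:ℝ) := by
        push_cast; rw [show (m:ℝ) + (i:ℝ) - m = (i:ℝ) by ring, abs_of_nonneg (by positivity)]
      rw [this]; ring
    rw [Finset.sum_congr rfl t1, Finset.sum_congr rfl t2, mul_add, Finset.mul_sum]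
    have t3 : ∀ i ∈ Finset.Icc 1 k, (k:ℝ) * (((k : ℝ) - i) / k * (s (m + i) + s (m - i)))
        = ((k:ℝ) - i) * s (m + i) + ((k:ℝ) - i) * s (m - i) := by
      intro i hi; field_simp
    rw [Finset.sum_congr rfl t3, Finset.sum_add_distrib]
    simp only [add_zero, sub_self, abs_zero, sub_zero]
    ring
  rw [key, abs_mul, abs_of_nonneg hk0.le, mul_comm]
  exact mul_le_mul_of_nonneg_right (hfan m k hk) hk0.le

/-- Proposition 4.2: the piecewise linear vector field associated to an infinitesimal
shear function `ṡ : ℤ → ℝ` on the fan at infinity satisfying the fan condition (10)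
with constant `C` (and `‖ṡ‖_∞ ≤ C`) is Zygmund with constant `2C + 18C`. -/
theorem piecewise_linear_fan_vector_field_zygmund
    (C : ℝ) (hC : 0 < C) (s : ℤ → ℝ) (V : ℝ → ℝ)
    (hfan : ∀ m : ℤ, ∀ k : ℕ, 1 ≤ k →
      |s m + ∑ i ∈ Finset.Icc 1 k, ((k : ℝ) - i) / k * (s (m + i) + s (m - i))| ≤ C)
    (hsup : ∀ m : ℤ, |s m| ≤ C)
    (hV01 : ∀ x ∈ Set.Icc (0 : ℝ) 1, V x = 0)
    (hVpos : ∀ n : ℕ, ∀ x ∈ Set.Ioc (n : ℝ) ((n : ℝ) + 1),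
      V x = ∑ i ∈ Finset.Icc 1 n, s (i : ℤ) * (x - i))
    (hVneg : ∀ n : ℕ, ∀ x ∈ Set.Ico (-(n : ℝ) - 1) (-(n : ℝ)),
      V x = -∑ i ∈ Finset.range (n + 1), s (-(i : ℤ)) * (x + i)) :
    ∀ x : ℝ, ∀ t : ℝ, 0 < t → |V (x + t) + V (x - t) - 2 * V x| ≤ (2 * C + 18 * C) * t := by
  intro x t ht
  have hk1 : 1 ≤ ⌈t⌉₊ := Nat.one_le_ceil_iff.mpr ht
  set k : ℕ := ⌈t⌉₊ with hkdef
  have htk : t ≤ (k:ℝ) := Nat.le_ceil t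
  have hkt : (k:ℝ) < t + 1 := Nat.ceil_lt_add_one ht.le
  set m0 : ℤ := round x with hm0def
  have hm0 : |x - (m0:ℝ)| ≤ 1/2 := abs_sub_round x
  set N : ℕ := ⌈|x|⌉₊ + k + 2 with hNdef
  have hNz : (N:ℤ) = (⌈|x|⌉₊:ℤ) + (k:ℤ) + 2 := by rw [hNdef]; push_cast; ring
  have hNr : (N:ℝ) = (⌈|x|⌉₊:ℝ) + (k:ℝ) + 2 := by rw [hNdef]; push_cast; ring
  have hxceil : |x| ≤ (⌈|x|⌉₊:ℝ) := Nat.le_ceil _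
  have hxN : |x| + t ≤ (N:ℝ) := by rw [hNr]; linarith
  rw [D_formula s V hV01 hVpos hVneg N x t ht.le hxN]
  rcases le_or_gt t 1 with hts | hts
  · -- small t : at most two kinks contribute
    have hwt : ∀ n : ℤ, max (t - |x - (n:ℝ)|) 0 ≤ t := fun n =>
      max_le (by linarith [abs_nonneg (x - (n:ℝ))]) ht.le
    have hwnn : ∀ n : ℤ, 0 ≤ max (t - |x - (n:ℝ)|) 0 := fun n => le_max_right _ _
    have step1 : |∑ n ∈ Finset.Icc (-(N:ℤ)) (N:ℤ), s n * max (t - |x - (n:ℝ)|) 0|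
        ≤ ∑ n ∈ Finset.Icc (-(N:ℤ)) (N:ℤ), C * max (t - |x - (n:ℝ)|) 0 := by
      refine le_trans (Finset.abs_sum_le_sum_abs _ _) (Finset.sum_le_sum ?_)
      intro n _
      rw [abs_mul, abs_of_nonneg (hwnn n)]
      exact mul_le_mul_of_nonneg_right (hsup n) (hwnn n)
    have hzero : ∀ n ∈ Finset.Icc (-(N:ℤ)) (N:ℤ), n ∉ ({⌊x⌋, ⌊x⌋ + 1} : Finset ℤ) →
        C * max (t - |x - (n:ℝ)|) 0 = 0 := by
      intro n _ hn
      simp only [Finset.mem_insert, Finset.mem_singleton] at hn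
      push_neg at hn
      have hfl : (⌊x⌋:ℝ) ≤ x := Int.floor_le x
      have hfl2 : x < (⌊x⌋:ℝ) + 1 := Int.lt_floor_add_one x
      have habs : t ≤ |x - (n:ℝ)| := by
        rcases (by omega : n ≤ ⌊x⌋ - 1 ∨ ⌊x⌋ + 2 ≤ n) with h | h
        · have h2 : (n:ℝ) ≤ (⌊x⌋:ℝ) - 1 := by exact_mod_cast h
          rw [abs_of_nonneg (by linarith)]; linarith
        · have h2 : ((⌊x⌋:ℝ) + 2) ≤ (n:ℝ) := by exact_mod_cast h
          rw [abs_of_nonpos (by linarith)]; linarith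
      rw [max_eq_right (by linarith), mul_zero]
    have step2 : ∑ n ∈ Finset.Icc (-(N:ℤ)) (N:ℤ), C * max (t - |x - (n:ℝ)|) 0
        = ∑ n ∈ Finset.Icc (-(N:ℤ)) (N:ℤ) ∩ {⌊x⌋, ⌊x⌋+1}, C * max (t - |x - (n:ℝ)|) 0 :=
      (Finset.sum_subset Finset.inter_subset_left
        (fun n hn hn' => hzero n hn (fun hmem => hn' (Finset.mem_inter.mpr ⟨hn, hmem⟩)))).symm
    have step3 : ∑ n ∈ Finset.Icc (-(N:ℤ)) (N:ℤ) ∩ {⌊x⌋, ⌊x⌋+1}, C * max (t - |x - (n:ℝ)|) 0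
        ≤ ∑ n ∈ ({⌊x⌋, ⌊x⌋+1} : Finset ℤ), C * max (t - |x - (n:ℝ)|) 0 :=
      Finset.sum_le_sum_of_subset_of_nonneg Finset.inter_subset_right
        (fun n _ _ => mul_nonneg hC.le (hwnn n))
    have step4 : ∑ n ∈ ({⌊x⌋, ⌊x⌋+1} : Finset ℤ), C * max (t - |x - (n:ℝ)|) 0 ≤ 2 * C * t := by
      rw [Finset.sum_pair (by omega : ⌊x⌋ ≠ ⌊x⌋ + 1)]
      nlinarith [hwt ⌊x⌋, hwt (⌊x⌋+1), hwnn ⌊x⌋, hwnn (⌊x⌋+1), hC]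
    nlinarith [step1, step2, step3, step4, mul_pos hC ht]
  · -- large t : compare with the fan condition at m0 = round x, radius k = ⌈t⌉
    have hm0r : |(m0:ℝ)| ≤ (⌈|x|⌉₊:ℝ) + 1 := by
      have h1 : |(m0:ℝ)| - |x| ≤ |(m0:ℝ) - x| := abs_sub_abs_le_abs_sub _ _
      rw [abs_sub_comm] at h1
      linarith
    have hm0u : m0 ≤ (⌈|x|⌉₊:ℤ) + 1 := by
      have := le_trans (le_abs_self (m0:ℝ)) hm0r
      exact_mod_cast this
    have hm0l : -((⌈|x|⌉₊:ℤ) + 1) ≤ m0 := by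
      have h1 : -((⌈|x|⌉₊:ℝ) + 1) ≤ (m0:ℝ) := by linarith [neg_abs_le (m0:ℝ)]
      exact_mod_cast h1
    have hsub2 : Finset.Icc (m0 - (k:ℤ)) (m0 + (k:ℤ)) ⊆ Finset.Icc (-(N:ℤ)) (N:ℤ) := by
      intro n hn
      simp only [Finset.mem_Icc] at hn ⊢
      rw [hNz] at *
      omega
    have absge : ∀ n : ℤ, n ∉ Finset.Icc (m0 - (k:ℤ)) (m0 + (k:ℤ)) →
        (k:ℝ) + 1 ≤ |(n:ℝ) - (m0:ℝ)| := by
      intro n hn'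
      have h : n ≤ m0 - k - 1 ∨ m0 + k + 1 ≤ n := by
        simp only [Finset.mem_Icc] at hn'; omega
      rcases h with h | h
      · have h2 : (n:ℝ) ≤ (m0:ℝ) - (k:ℝ) - 1 := by exact_mod_cast h
        rw [abs_of_nonpos (by linarith)]; linarith
      · have h2 : (m0:ℝ) + (k:ℝ) + 1 ≤ (n:ℝ) := by exact_mod_cast h
        rw [abs_of_nonneg (by linarith)]; linarith
    have absle : ∀ n : ℤ, n ∈ Finset.Icc (m0 - (k:ℤ)) (m0 + (k:ℤ)) →
        |(n:ℝ) - (m0:ℝ)| ≤ (k:ℝ) := by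
      intro n hn
      simp only [Finset.mem_Icc] at hn
      have h1 : (m0:ℝ) - (k:ℝ) ≤ (n:ℝ) := by exact_mod_cast hn.1
      have h2 : (n:ℝ) ≤ (m0:ℝ) + (k:ℝ) := by exact_mod_cast hn.2
      rw [abs_le]; constructor <;> linarith
    have hfanF : |∑ n ∈ Finset.Icc (-(N:ℤ)) (N:ℤ), s n * max ((k:ℝ) - |(n:ℝ) - (m0:ℝ)|) 0|
        ≤ C * k := by
      have h0 : ∑ n ∈ Finset.Icc (-(N:ℤ)) (N:ℤ), s n * max ((k:ℝ) - |(n:ℝ) - (m0:ℝ)|) 0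
          = ∑ n ∈ Finset.Icc (m0 - (k:ℤ)) (m0 + (k:ℤ)), s n * max ((k:ℝ) - |(n:ℝ) - (m0:ℝ)|) 0 := by
        refine (Finset.sum_subset hsub2 ?_).symm
        intro n _ hn'
        have h2 := absge n hn'
        rw [max_eq_right (by linarith), mul_zero]
      have h1 : ∑ n ∈ Finset.Icc (m0 - (k:ℤ)) (m0 + (k:ℤ)), s n * max ((k:ℝ) - |(n:ℝ) - (m0:ℝ)|) 0
          = ∑ n ∈ Finset.Icc (m0 - (k:ℤ)) (m0 + (k:ℤ)), s n * ((k:ℝ) - |(n:ℝ) - (m0:ℝ)|) := by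
        apply Finset.sum_congr rfl
        intro n hn
        have h2 := absle n hn
        rw [max_eq_left (by linarith)]
      rw [h0, h1]
      exact fan_kernel C s hfan m0 k hk1
    have hdiff : ∀ n : ℤ,
        |max (t - |x - (n:ℝ)|) 0 - max ((k:ℝ) - |(n:ℝ) - (m0:ℝ)|) 0| ≤ 3/2 := by
      intro n
      refine le_trans (abs_max_sub_max_le_abs _ _ _) ?_
      have h1 : |t - (k:ℝ)| ≤ 1 := by
        rw [abs_sub_comm, abs_of_nonneg (by linarith)]; linarith
      have h2 : |(|(n:ℝ) - x|) - (|(n:ℝ) - (m0:ℝ)|)| ≤ 1/2 := by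
        refine le_trans (abs_abs_sub_abs_le_abs_sub _ _) ?_
        rw [show ((n:ℝ) - x) - ((n:ℝ) - (m0:ℝ)) = -(x - (m0:ℝ)) by ring, abs_neg]
        exact hm0
      rw [abs_sub_comm x (n:ℝ)]
      have h3 : (t - |(n:ℝ) - x|) - ((k:ℝ) - |(n:ℝ) - (m0:ℝ)|)
          = (t - (k:ℝ)) + (|(n:ℝ) - (m0:ℝ)| - |(n:ℝ) - x|) := by ring
      rw [h3]
      refine le_trans (abs_add_le _ _) ?_
      rw [abs_sub_comm (|(n:ℝ) - (m0:ℝ)|)]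
      linarith
    have hGzero : ∀ n ∈ Finset.Icc (-(N:ℤ)) (N:ℤ), n ∉ Finset.Icc (m0 - (k:ℤ)) (m0 + (k:ℤ)) →
        |max (t - |x - (n:ℝ)|) 0 - max ((k:ℝ) - |(n:ℝ) - (m0:ℝ)|) 0| = 0 := by
      intro n _ hn'
      have h2 := absge n hn'
      have h3 : t ≤ |x - (n:ℝ)| := by
        have h4 : |(n:ℝ) - (m0:ℝ)| ≤ |(n:ℝ) - x| + |x - (m0:ℝ)| := abs_sub_le _ _ _
        rw [abs_sub_comm x (n:ℝ)]
        linarith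
      rw [max_eq_right (by linarith), max_eq_right (by linarith)]
      simp
    have cardG : ((Finset.Icc (m0 - (k:ℤ)) (m0 + (k:ℤ))).card : ℝ) = 2 * (k:ℝ) + 1 := by
      rw [Int.card_Icc]
      have : ((m0 + (k:ℤ)) + 1 - (m0 - (k:ℤ))).toNat = 2 * k + 1 := by omega
      rw [this]; push_cast; ring
    have sumdiff : ∑ n ∈ Finset.Icc (-(N:ℤ)) (N:ℤ),
        |max (t - |x - (n:ℝ)|) 0 - max ((k:ℝ) - |(n:ℝ) - (m0:ℝ)|) 0|
        ≤ (2 * (k:ℝ) + 1) * (3/2) := by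
      have hinter := Finset.sum_subset
        (Finset.inter_subset_left :
          Finset.Icc (-(N:ℤ)) (N:ℤ) ∩ Finset.Icc (m0 - (k:ℤ)) (m0 + (k:ℤ))
            ⊆ Finset.Icc (-(N:ℤ)) (N:ℤ))
        (fun n hn hn' => hGzero n hn (fun hmem => hn' (Finset.mem_inter.mpr ⟨hn, hmem⟩)))
      rw [← hinter]
      refine le_trans (Finset.sum_le_sum (fun n _ => hdiff n)) ?_
      rw [Finset.sum_const, nsmul_eq_mul]
      have hcard : ((Finset.Icc (-(N:ℤ)) (N:ℤ) ∩ Finset.Icc (m0 - (k:ℤ)) (m0 + (k:ℤ))).card : ℝ)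
          ≤ 2 * (k:ℝ) + 1 := by
        rw [← cardG]
        exact_mod_cast Finset.card_le_card Finset.inter_subset_right
      nlinarith [hcard]
    have b1 : |∑ n ∈ Finset.Icc (-(N:ℤ)) (N:ℤ),
        s n * (max (t - |x - (n:ℝ)|) 0 - max ((k:ℝ) - |(n:ℝ) - (m0:ℝ)|) 0)|
        ≤ C * ((2 * (k:ℝ) + 1) * (3/2)) := by
      refine le_trans (Finset.abs_sum_le_sum_abs _ _) ?_
      have hterm : ∀ n ∈ Finset.Icc (-(N:ℤ)) (N:ℤ),
          |s n * (max (t - |x - (n:ℝ)|) 0 - max ((k:ℝ) - |(n:ℝ) - (m0:ℝ)|) 0)|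
          ≤ C * |max (t - |x - (n:ℝ)|) 0 - max ((k:ℝ) - |(n:ℝ) - (m0:ℝ)|) 0| := by
        intro n _
        rw [abs_mul]
        exact mul_le_mul_of_nonneg_right (hsup n) (abs_nonneg _)
      refine le_trans (Finset.sum_le_sum hterm) ?_
      rw [← Finset.mul_sum]
      exact mul_le_mul_of_nonneg_left sumdiff hC.le
    have split : ∑ n ∈ Finset.Icc (-(N:ℤ)) (N:ℤ), s n * max (t - |x - (n:ℝ)|) 0
        = (∑ n ∈ Finset.Icc (-(N:ℤ)) (N:ℤ),
            s n * (max (t - |x - (n:ℝ)|) 0 - max ((k:ℝ) - |(n:ℝ) - (m0:ℝ)|) 0))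
          + ∑ n ∈ Finset.Icc (-(N:ℤ)) (N:ℤ), s n * max ((k:ℝ) - |(n:ℝ) - (m0:ℝ)|) 0 := by
      rw [← Finset.sum_add_distrib]
      apply Finset.sum_congr rfl
      intro n _; ring
    rw [split]
    refine le_trans (abs_add_le _ _) ?_
    have := add_le_add b1 hfanF
    refine le_trans this ?_
    nlinarith [hC, hts, hkt, htk, mul_pos hC ht]
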